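/- For every h ∈ (0, 1/2) and every α ∈ (0, 2h) there exists ρ* > ρ_h(α) such that H_α^h(ρ) < H_{2h}^h(ρ) for all ρ ∈ [ρ_h(α), ρ*), H_α^h(ρ*) = H_{2h}^h(ρ*), and H_α^h(ρ) > H_{2h}^h(ρ) for all ρ > ρ* (i.e. the rotational surfaces H_α^h and the entire graph S^h = H_{2h}^h intersect in a circle; inside this circle H_α^h < S^h and outside the opposite inequality holds). -/

import Mathlib

open Real Set Filter MeasureTheory

/-- Inverse hyperbolic cosine. -/
noncomputable def arcosh (x : ℝ) : ℝ := Real.log (x + Real.sqrt (x ^ 2 - 1))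

/-- The root `φ(h,α)` of the quadratic `(s² − 1) − (2hs − α)²`. -/
noncomputable def phi (h α : ℝ) : ℝ :=
  (-2 * α * h + Real.sqrt (1 - 4 * h ^ 2 + α ^ 2)) / (1 - 4 * h ^ 2)

/-- The negative root `b(h,α)` of the quadratic `(s² − 1) − (2hs − α)²`. -/
noncomputable def bb (h α : ℝ) : ℝ :=
  -(2 * h * α + Real.sqrt (1 - 4 * h ^ 2 + α ^ 2)) / (1 - 4 * h ^ 2)

/-- The radius `ρ_h(α)` of the base circle of the rotational cmc `h` surface `H_α^h`. -/
noncomputable def rho (h α : ℝ) : ℝ := _root_.arcosh (phi h α)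

/-- The derivative `u_α^h` of the profile function of `H_α^h`. -/
noncomputable def uu (h α ρ : ℝ) : ℝ :=
  (-α + 2 * h * Real.cosh ρ) /
    Real.sqrt (Real.sinh ρ ^ 2 - (-α + 2 * h * Real.cosh ρ) ^ 2)

/-- The profile function `H_α^h` of the rotational cmc `h` surfaces of Sa Earp–Toubiana. -/
noncomputable def HH (h α ρ : ℝ) : ℝ := ∫ w in rho h α..ρ, uu h α w

noncomputable def lam (h α : ℝ) : ℝ := Real.sqrt (1 - 4 * h ^ 2 + α ^ 2)

lemma cosh_arcosh {x : ℝ} (hx : 1 ≤ x) : Real.cosh (_root_.arcosh x) = x := by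
  have h0 : (0:ℝ) ≤ x ^ 2 - 1 := by nlinarith
  have hs : Real.sqrt (x ^ 2 - 1) ^ 2 = x ^ 2 - 1 := Real.sq_sqrt h0
  have hsn : 0 ≤ Real.sqrt (x ^ 2 - 1) := Real.sqrt_nonneg _
  have hy : 0 < x + Real.sqrt (x ^ 2 - 1) := by nlinarith
  rw [_root_.arcosh, Real.cosh_eq, Real.exp_log hy, ← Real.log_inv, Real.exp_log (by positivity)]
  rw [div_eq_iff (by norm_num : (2:ℝ) ≠ 0)]
  field_simp
  nlinarith [hs]

lemma arcosh_pos {x : ℝ} (hx : 1 < x) : 0 < _root_.arcosh x := by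
  apply Real.log_pos
  have := Real.sqrt_nonneg (x ^ 2 - 1)
  linarith

lemma arcosh_nonneg {x : ℝ} (hx : 1 ≤ x) : 0 ≤ _root_.arcosh x := by
  apply Real.log_nonneg
  have := Real.sqrt_nonneg (x ^ 2 - 1)
  linarith

lemma arcosh_one : _root_.arcosh 1 = 0 := by
  simp [_root_.arcosh]

lemma d_pos {h : ℝ} (h0 : 0 < h) (h1 : h < 1/2) : 0 < 1 - 4*h^2 := by nlinarith

lemma lam_sq {h α : ℝ} (h0 : 0 < h) (h1 : h < 1/2) : lam h α ^ 2 = 1 - 4*h^2 + α^2 :=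
  Real.sq_sqrt (by nlinarith)

lemma lam_pos {h α : ℝ} (h0 : 0 < h) (h1 : h < 1/2) : 0 < lam h α :=
  Real.sqrt_pos.2 (by nlinarith)

lemma lam_le_one {h α : ℝ} (h0 : 0 < h) (h1 : h < 1/2) (a0 : 0 < α) (a2 : α ≤ 2*h) : lam h α ≤ 1 := by
  rw [show (1:ℝ) = Real.sqrt 1 by simp]
  exact Real.sqrt_le_sqrt (by nlinarith)

lemma lam_lt_one {h α : ℝ} (h0 : 0 < h) (h1 : h < 1/2) (a0 : 0 < α) (a2' : α < 2*h) : lam h α < 1 := by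
  rw [show (1:ℝ) = Real.sqrt 1 by simp]
  exact Real.sqrt_lt_sqrt (by nlinarith) (by nlinarith)

lemma two_h_lam {h α : ℝ} (h0 : 0 < h) (h1 : h < 1/2) (a0 : 0 < α) (a2 : α ≤ 2*h) :
    α ≤ 2*h*lam h α := by
  have l2 := lam_sq (h := h) (α := α) h0 h1
  have lp := lam_pos (h := h) (α := α) h0 h1
  have key : α^2 ≤ (2*h*lam h α)^2 := by nlinarith [mul_nonneg (by nlinarith : (0:ℝ) ≤ 1-4*h^2) (by nlinarith : (0:ℝ) ≤ 4*h^2 - α^2)]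
  calc α = Real.sqrt (α^2) := by rw [Real.sqrt_sq a0.le]
  _ ≤ Real.sqrt ((2*h*lam h α)^2) := Real.sqrt_le_sqrt key
  _ = 2*h*lam h α := Real.sqrt_sq (by positivity)

lemma phi_eq {h α : ℝ} (h0 : 0 < h) (h1 : h < 1/2) :
    (1 - 4*h^2) * phi h α = -2*α*h + lam h α := by
  have d := d_pos h0 h1
  rw [phi, lam]; field_simp

lemma lam_two_h {h : ℝ} : lam h (2*h) = 1 := by
  rw [lam]
  norm_num [show 1 - 4*h^2 + (2*h)^2 = 1 by ring]

lemma phi_two_h {h : ℝ} (h0 : 0 < h) (h1 : h < 1/2) : phi h (2*h) = 1 := by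
  have d := d_pos h0 h1
  rw [phi, show 1 - 4*h^2 + (2*h)^2 = 1 by ring]
  rw [Real.sqrt_one]
  rw [div_eq_one_iff_eq d.ne']
  ring

lemma phi_ge_one {h α : ℝ} (h0 : 0 < h) (h1 : h < 1/2) (a0 : 0 < α) (a2 : α ≤ 2*h) :
    1 ≤ phi h α := by
  have d := d_pos h0 h1
  have key : (1 - 4*h^2 + 2*α*h)^2 ≤ lam h α ^2 := by
    rw [lam_sq h0 h1]
    nlinarith [mul_nonneg d.le (sq_nonneg (2*h - α))]
  have h2 : 1 - 4*h^2 + 2*α*h ≤ lam h α := by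
    calc 1 - 4*h^2 + 2*α*h = Real.sqrt ((1 - 4*h^2 + 2*α*h)^2) := by
          rw [Real.sqrt_sq (by nlinarith)]
      _ ≤ Real.sqrt (lam h α ^ 2) := Real.sqrt_le_sqrt key
      _ = lam h α := Real.sqrt_sq (lam_pos h0 h1).le
  rw [phi, le_div_iff₀ d, lam] at *
  linarith

lemma phi_gt_one {h α : ℝ} (h0 : 0 < h) (h1 : h < 1/2) (a0 : 0 < α) (a2 : α < 2*h) :
    1 < phi h α := by
  have d := d_pos h0 h1
  have key : (1 - 4*h^2 + 2*α*h)^2 < lam h α ^2 := by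
    rw [lam_sq h0 h1]
    nlinarith [mul_pos d (pow_pos (show (0:ℝ) < 2*h - α by linarith) 2)]
  have h2 : 1 - 4*h^2 + 2*α*h < lam h α := by
    calc 1 - 4*h^2 + 2*α*h = Real.sqrt ((1 - 4*h^2 + 2*α*h)^2) := by
          rw [Real.sqrt_sq (by nlinarith)]
      _ < Real.sqrt (lam h α ^ 2) := Real.sqrt_lt_sqrt (sq_nonneg _) key
      _ = lam h α := Real.sqrt_sq (lam_pos h0 h1).le
  rw [phi, lt_div_iff₀ d, lam] at *
  linarith

lemma bb_neg {h α : ℝ} (h0 : 0 < h) (h1 : h < 1/2) (a0 : 0 < α) : bb h α < 0 := by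
  have d := d_pos h0 h1
  have lp := lam_pos (α := α) h0 h1
  rw [bb, div_neg_iff]
  right
  constructor
  · rw [lam] at lp; nlinarith
  · linarith

lemma quad_key {h α : ℝ} (h0 : 0 < h) (h1 : h < 1/2) (t : ℝ) :
    t^2 - 1 - (2*h*t-α)^2 = (1-4*h^2) * ((t - phi h α)*(t - bb h α)) := by
  have d := d_pos h0 h1
  have hsum : phi h α + bb h α = -4*h*α/(1-4*h^2) := by
    rw [phi, bb]; field_simp; ring
  have hprod : phi h α * bb h α = -(1+α^2)/(1-4*h^2) := by
    have l2 := lam_sq (α := α) h0 h1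
    rw [phi, bb, div_mul_div_comm, div_eq_div_iff (by positivity) d.ne']
    rw [lam] at l2
    nlinarith [l2]
  have expand : (t - phi h α)*(t - bb h α) = t^2 - (phi h α + bb h α)*t + phi h α * bb h α := by ring
  rw [expand, hsum, hprod]
  rw [mul_add, mul_sub, mul_div_cancel₀ _ d.ne', ← mul_assoc, mul_div_cancel₀ _ d.ne']
  ring

lemma phi_lin {h α : ℝ} (h0 : 0 < h) (h1 : h < 1/2) :
    (1-4*h^2) * (2*h*phi h α - α) = 2*h*lam h α - α := by
  have := phi_eq (α := α) h0 h1
  nlinarith [this]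

lemma two_h_phi {h α : ℝ} (h0 : 0 < h) (h1 : h < 1/2) (a0 : 0 < α) (a2 : α ≤ 2*h) :
    α ≤ 2*h*phi h α := by
  have d := d_pos h0 h1
  have := phi_lin (α := α) h0 h1
  have := two_h_lam h0 h1 a0 a2
  nlinarith

lemma rho_two_h {h : ℝ} (h0 : 0 < h) (h1 : h < 1/2) : rho h (2*h) = 0 := by
  rw [rho, phi_two_h h0 h1, arcosh_one]

lemma cosh_rho {h α : ℝ} (h0 : 0 < h) (h1 : h < 1/2) (a0 : 0 < α) (a2 : α ≤ 2*h) :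
    Real.cosh (rho h α) = phi h α :=
  _root_.cosh_arcosh (phi_ge_one h0 h1 a0 a2)

lemma rho_pos {h α : ℝ} (h0 : 0 < h) (h1 : h < 1/2) (a0 : 0 < α) (a2 : α < 2*h) :
    0 < rho h α := _root_.arcosh_pos (phi_gt_one h0 h1 a0 a2)

lemma rho_nonneg {h α : ℝ} (h0 : 0 < h) (h1 : h < 1/2) (a0 : 0 < α) (a2 : α ≤ 2*h) :
    0 ≤ rho h α := _root_.arcosh_nonneg (phi_ge_one h0 h1 a0 a2)

lemma Q_pos {h α : ℝ} (h0 : 0 < h) (h1 : h < 1/2) (a0 : 0 < α) (a2 : α ≤ 2*h)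
    {t : ℝ} (ht : phi h α < t) :
    0 < t^2 - 1 - (2*h*t-α)^2 := by
  have d := d_pos h0 h1
  have hb := bb_neg h0 h1 a0
  have hphi : (0:ℝ) < phi h α := lt_of_lt_of_le one_pos (phi_ge_one h0 h1 a0 a2)
  rw [quad_key h0 h1]
  have h3 : 0 < t - phi h α := by linarith
  have h4 : 0 < t - bb h α := by linarith
  exact mul_pos d (mul_pos h3 h4)

lemma Q_lb {h α : ℝ} (h0 : 0 < h) (h1 : h < 1/2) (a0 : 0 < α) {t : ℝ} (ht : phi h α ≤ t) :
    (1-4*h^2) * ((t - phi h α) * (phi h α - bb h α)) ≤ t^2 - 1 - (2*h*t-α)^2 := by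
  have d := d_pos h0 h1
  have hb := bb_neg h0 h1 a0
  rw [quad_key h0 h1]
  have h2 : 0 ≤ t - phi h α := by linarith
  nlinarith [mul_nonneg d.le (mul_nonneg h2 h2)]

lemma sinh_sq_sub (h α w : ℝ) :
    Real.sinh w ^ 2 - (-α + 2*h*Real.cosh w)^2
      = (Real.cosh w)^2 - 1 - (2*h*Real.cosh w - α)^2 := by
  have hc := Real.cosh_sq w
  nlinarith [hc]

lemma cosh_gt_phi {h α : ℝ} (h0 : 0 < h) (h1 : h < 1/2) (a0 : 0 < α) (a2 : α ≤ 2*h)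
    {w : ℝ} (hw : rho h α < w) : phi h α < Real.cosh w := by
  have hr := rho_nonneg h0 h1 a0 a2
  have : Real.cosh (rho h α) < Real.cosh w := by
    rw [Real.cosh_lt_cosh, abs_of_nonneg hr, abs_of_nonneg (le_trans hr hw.le)]
    exact hw
  rwa [cosh_rho h0 h1 a0 a2] at this

lemma g_pos {h α : ℝ} (h0 : 0 < h) (h1 : h < 1/2) (a0 : 0 < α) (a2 : α ≤ 2*h)
    {w : ℝ} (hw : rho h α < w) : 0 < -α + 2*h*Real.cosh w := by
  have h2 := cosh_gt_phi h0 h1 a0 a2 hw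
  have h3 := two_h_phi h0 h1 a0 a2
  nlinarith

lemma D_pos {h α : ℝ} (h0 : 0 < h) (h1 : h < 1/2) (a0 : 0 < α) (a2 : α ≤ 2*h)
    {w : ℝ} (hw : rho h α < w) :
    0 < Real.sinh w ^ 2 - (-α + 2*h*Real.cosh w)^2 := by
  rw [sinh_sq_sub]
  exact Q_pos h0 h1 a0 a2 (cosh_gt_phi h0 h1 a0 a2 hw)

lemma uu_pos {h α : ℝ} (h0 : 0 < h) (h1 : h < 1/2) (a0 : 0 < α) (a2 : α ≤ 2*h)
    {w : ℝ} (hw : rho h α < w) : 0 < uu h α w := by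
  rw [uu]
  exact div_pos (by simpa using g_pos h0 h1 a0 a2 hw)
    (Real.sqrt_pos.2 (by simpa using D_pos h0 h1 a0 a2 hw))

lemma uu_lt {h α : ℝ} (h0 : 0 < h) (h1 : h < 1/2) (a0 : 0 < α) (a2 : α < 2*h)
    {w : ℝ} (hw : rho h α < w) : uu h (2*h) w < uu h α w := by
  have hcφ := cosh_gt_phi h0 h1 a0 a2.le hw
  have hφ1 := phi_gt_one h0 h1 a0 a2
  have hgα := g_pos h0 h1 a0 a2.le hw
  have hDα := D_pos h0 h1 a0 a2.le hw
  have h20 : (0:ℝ) < 2*h := by linarith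
  have hr2 : rho h (2*h) < w := by
    rw [rho_two_h h0 h1]
    linarith [rho_nonneg h0 h1 a0 a2.le]
  have hg2 := g_pos (α := 2*h) h0 h1 h20 le_rfl hr2
  have hD2 := D_pos (α := 2*h) h0 h1 h20 le_rfl hr2
  have hglt : -(2*h) + 2*h*Real.cosh w < -α + 2*h*Real.cosh w := by linarith
  have hDlt : Real.sinh w ^ 2 - (-α + 2*h*Real.cosh w)^2
      ≤ Real.sinh w ^ 2 - (-(2*h) + 2*h*Real.cosh w)^2 := by nlinarith
  rw [uu, uu]
  exact div_lt_div₀ hglt (Real.sqrt_le_sqrt hDlt) hgα.le (Real.sqrt_pos.2 hDα)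

lemma uu_two_h_bound {h : ℝ} (h0 : 0 < h) (h1 : h < 1/2) {w : ℝ} (hw : 0 < w) :
    uu h (2*h) w ≤ 2*h/Real.sqrt (1-4*h^2) := by
  have d := d_pos h0 h1
  have h20 : (0:ℝ) < 2*h := by linarith
  have hr2 : rho h (2*h) < w := by rw [rho_two_h h0 h1]; exact hw
  have hg2 := g_pos (α := 2*h) h0 h1 h20 le_rfl hr2
  have hD2 := D_pos (α := 2*h) h0 h1 h20 le_rfl hr2
  have hc1 := Real.one_le_cosh w
  rw [uu, div_le_div_iff₀ (Real.sqrt_pos.2 (by simpa using hD2)) (Real.sqrt_pos.2 d)]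
  have e1 : (-(2*h) + 2*h*Real.cosh w) * Real.sqrt (1-4*h^2)
      = Real.sqrt ((-(2*h) + 2*h*Real.cosh w)^2 * (1-4*h^2)) := by
    rw [Real.sqrt_mul (sq_nonneg _), Real.sqrt_sq hg2.le]
  have e2 : 2*h*Real.sqrt (Real.sinh w ^ 2 - (-(2*h) + 2*h*Real.cosh w)^2)
      = Real.sqrt ((2*h)^2 * (Real.sinh w ^ 2 - (-(2*h) + 2*h*Real.cosh w)^2)) := by
    rw [Real.sqrt_mul (sq_nonneg _), Real.sqrt_sq h20.le]
  rw [show (-(2*h:ℝ) + 2*h*Real.cosh w) = -(2*h) + 2*h*Real.cosh w by ring] at e1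
  rw [e1, e2]
  apply Real.sqrt_le_sqrt
  have hc := Real.cosh_sq w
  nlinarith [sq_nonneg (Real.cosh w - 1), mul_pos h0 h0]

lemma phi_sub_bb {h α : ℝ} (h0 : 0 < h) (h1 : h < 1/2) :
    phi h α - bb h α = 2*lam h α/(1-4*h^2) := by
  have d := d_pos h0 h1
  rw [phi, bb, lam]
  field_simp
  ring

lemma bb_two_h {h : ℝ} : bb h (2*h) = -(4*h^2+1)/(1-4*h^2) := by
  rw [bb, show 1-4*h^2+(2*h)^2 = 1 by ring, Real.sqrt_one]
  ring_nf

lemma quad_rel {h α : ℝ} (h0 : 0 < h) (h1 : h < 1/2) (τ : ℝ) :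
    (lam h α*τ + (phi h α - lam h α))^2 - 1
      - (2*h*(lam h α*τ + (phi h α - lam h α)) - α)^2
    = lam h α^2 * (τ^2 - 1 - (2*h*τ - 2*h)^2) := by
  have d := d_pos h0 h1
  have e1 : bb h α = phi h α - 2*lam h α/(1-4*h^2) := by linarith [phi_sub_bb (α := α) h0 h1]
  rw [quad_key (α := α) h0 h1, quad_key (α := 2*h) h0 h1, phi_two_h h0 h1, bb_two_h, e1]
  field_simp
  ring

lemma core_poly {h α : ℝ} (h0 : 0 < h) (h1 : h < 1/2) (a0 : 0 < α) (a2 : α < 2*h)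
    {τ : ℝ} (hτ : 1 ≤ τ) :
    4*h^2*(τ-1)^2*((lam h α*τ + (phi h α - lam h α))^2-1)
      ≤ (2*h*(lam h α*τ + (phi h α - lam h α))-α)^2*(τ^2-1) := by
  have d := d_pos h0 h1
  have lsq : lam h α^2 = 1-4*h^2+α^2 := lam_sq h0 h1
  have hphi : (1-4*h^2)*phi h α = -2*α*h + lam h α := phi_eq h0 h1
  have hL : 0 < lam h α := lam_pos h0 h1
  have w1 : 0 ≤ 2*h*lam h α - α := by linarith [two_h_lam h0 h1 a0 a2.le]
  have w3 : 0 ≤ 4*h^2 - α^2 := by nlinarith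
  set L := lam h α
  set f := phi h α
  have hsd : ((16*h^2*L - 4*h*α)*f - 8*h*L*α + α^2 + 4*h^2)*(1-4*h^2)
      = 2*(4*h^2-α^2)*(1-4*h^2) + 3*(2*h*L-α)^2 := by
    linear_combination (16*h^2*L - 4*h*α)*hphi + 4*h^2*lsq
  have hs : 0 ≤ (16*h^2*L - 4*h*α)*f - 8*h*L*α + α^2 + 4*h^2 := by
    nlinarith [sq_nonneg (2*h*L-α), mul_nonneg w3 d.le]
  have ident : (2*h*(L*τ + (f - L))-α)^2*(τ^2-1) - 4*h^2*(τ-1)^2*((L*τ + (f - L))^2-1)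
      = (8*h^2*L^2 - 4*h*L*α)*(τ-1)^3
        + ((16*h^2*L - 4*h*α)*f - 8*h*L*α + α^2 + 4*h^2)*(τ-1)^2
        + 2*(2*h*f-α)^2*(τ-1) := by ring
  have A1 : 0 ≤ (8*h^2*L^2 - 4*h*L*α)*(τ-1)^3 := by
    apply mul_nonneg _ (pow_nonneg (by linarith) 3)
    nlinarith [mul_nonneg (mul_pos h0 hL).le w1]
  have A2 : 0 ≤ ((16*h^2*L - 4*h*α)*f - 8*h*L*α + α^2 + 4*h^2)*(τ-1)^2 :=
    mul_nonneg hs (sq_nonneg _)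
  have A3 : 0 ≤ 2*(2*h*f-α)^2*(τ-1) := mul_nonneg (by positivity) (by linarith)
  linarith [ident, A1, A2, A3]

lemma uu_contOn {h α : ℝ} (h0 : 0 < h) (h1 : h < 1/2) (a0 : 0 < α) (a2 : α ≤ 2*h)
    {s : Set ℝ} (hs : ∀ w ∈ s, rho h α < w) : ContinuousOn (uu h α) s := by
  unfold uu
  apply ContinuousOn.div
  · fun_prop
  · apply Continuous.continuousOn
    apply Real.continuous_sqrt.comp
    fun_prop
  · intro w hw
    exact (Real.sqrt_pos.2 (D_pos h0 h1 a0 a2 (hs w hw))).ne'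

lemma cosh_lb {a w : ℝ} (ha : 0 ≤ a) (haw : a ≤ w) :
    Real.cosh a + Real.sinh a * (w - a) ≤ Real.cosh w := by
  have e : Real.cosh w = Real.cosh (a + (w - a)) := by ring_nf
  rw [e, Real.cosh_add]
  have h1 : (1:ℝ) ≤ Real.cosh (w - a) := Real.one_le_cosh _
  have h2 : w - a ≤ Real.sinh (w - a) := Real.self_le_sinh_iff.2 (by linarith)
  have h3 : 0 ≤ Real.sinh a := Real.sinh_nonneg_iff.2 ha
  have h4 : 0 < Real.cosh a := Real.cosh_pos a
  nlinarith

lemma sqrt_half_inv (C y : ℝ) (hy : 0 < y) :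
    C * y ^ (-(1/2) : ℝ) = C / Real.sqrt y := by
  rw [Real.rpow_neg hy.le, Real.sqrt_eq_rpow]
  ring

lemma integrable_uu {h α : ℝ} (h0 : 0 < h) (h1 : h < 1/2) (a0 : 0 < α) (a2 : α < 2*h)
    {x : ℝ} (hx : rho h α ≤ x) :
    IntervalIntegrable (uu h α) volume (rho h α) x := by
  set R := rho h α with hR
  have d := d_pos h0 h1
  have hRpos : 0 < R := rho_pos h0 h1 a0 a2
  have hsinh : 0 < Real.sinh R := Real.sinh_pos_iff.2 hRpos
  have hpb : 0 < phi h α - bb h α := by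
    have := bb_neg h0 h1 a0
    have := phi_ge_one h0 h1 a0 a2.le
    linarith
  set K := (1-4*h^2) * (Real.sinh R * (phi h α - bb h α)) with hK
  have hKpos : 0 < K := by positivity
  set C := 2*h*Real.cosh x / Real.sqrt K with hC
  have hCpos : 0 < C := by positivity
  have hgint : IntervalIntegrable (fun w => C * (w - R) ^ (-(1/2) : ℝ)) volume R x := by
    have base : IntervalIntegrable (fun t : ℝ => t ^ (-(1/2) : ℝ)) volume 0 (x - R) :=
      intervalIntegral.intervalIntegrable_rpow' (by norm_num)
    have := (base.comp_sub_right R).const_mul C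
    simpa using this
  apply hgint.mono_fun
  · exact ((uu_contOn h0 h1 a0 a2.le (s := Ioc R x) (fun w hw => hw.1)).aestronglyMeasurable
      measurableSet_Ioc).mono_measure (Measure.restrict_mono_set _ (by rw [uIoc_of_le hx]))
  · rw [uIoc_of_le hx]
    filter_upwards [MeasureTheory.ae_restrict_mem measurableSet_Ioc] with w hw
    have hw1 : R < w := hw.1
    have hw2 : w ≤ x := hw.2
    have hwR : 0 < w - R := by linarith
    have hu := uu_pos h0 h1 a0 a2.le hw1
    have hD := D_pos h0 h1 a0 a2.le hw1
    have hg := g_pos h0 h1 a0 a2.le hw1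
    rw [Real.norm_of_nonneg hu.le, Real.norm_of_nonneg (by positivity)]
    rw [sqrt_half_inv C _ hwR, hC, div_div, uu]
    -- goal : g/√D ≤ 2h cosh x / (√K * √(w-R))
    have hcx : Real.cosh w ≤ Real.cosh x := by
      rw [Real.cosh_le_cosh, abs_of_nonneg (by linarith), abs_of_nonneg (by linarith)]
      exact hw2
    have hDlb : K * (w - R) ≤ Real.sinh w ^ 2 - (-α + 2*h*Real.cosh w)^2 := by
      rw [sinh_sq_sub]
      have l1 := Q_lb (α := α) h0 h1 a0 (le_of_lt (cosh_gt_phi h0 h1 a0 a2.le hw1))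
      have l2 : Real.sinh R * (w - R) ≤ Real.cosh w - phi h α := by
        have := cosh_lb hRpos.le (by linarith : R ≤ w)
        rw [cosh_rho h0 h1 a0 a2.le] at this
        linarith
      have : K * (w-R) ≤ (1-4*h^2) * ((Real.cosh w - phi h α) * (phi h α - bb h α)) := by
        rw [hK]
        have := mul_le_mul_of_nonneg_right l2 hpb.le
        nlinarith
      linarith
    have hsq : Real.sqrt K * Real.sqrt (w - R)
        ≤ Real.sqrt (Real.sinh w ^ 2 - (-α + 2*h*Real.cosh w)^2) := by
      rw [← Real.sqrt_mul hKpos.le]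
      exact Real.sqrt_le_sqrt hDlb
    apply div_le_div₀ (by positivity) (by nlinarith) (by positivity) hsq

lemma integrable_uu2 {h : ℝ} (h0 : 0 < h) (h1 : h < 1/2) {x : ℝ} (hx : 0 ≤ x) :
    IntervalIntegrable (uu h (2*h)) volume 0 x := by
  have d := d_pos h0 h1
  have hM : (0:ℝ) < 2*h/Real.sqrt (1-4*h^2) := by positivity
  apply (intervalIntegrable_const (c := 2*h/Real.sqrt (1-4*h^2))).mono_fun
  · apply ((uu_contOn (α := 2*h) h0 h1 (by linarith) le_rfl (s := Ioc 0 x)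
      (fun w hw => by rw [rho_two_h h0 h1]; exact hw.1)).aestronglyMeasurable
      measurableSet_Ioc).mono_measure (Measure.restrict_mono_set _ (by rw [uIoc_of_le hx]))
  · rw [uIoc_of_le hx]
    filter_upwards [MeasureTheory.ae_restrict_mem measurableSet_Ioc] with w hw
    have hu := uu_pos (α := 2*h) h0 h1 (by linarith) le_rfl
      (by rw [rho_two_h h0 h1]; exact hw.1)
    rw [Real.norm_of_nonneg hu.le, Real.norm_of_nonneg hM.le]
    exact uu_two_h_bound h0 h1 hw.1

lemma integrable_uu' {h α : ℝ} (h0 : 0 < h) (h1 : h < 1/2) (a0 : 0 < α) (a2 : α < 2*h)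
    {x y : ℝ} (hx : rho h α ≤ x) (hy : x ≤ y) :
    IntervalIntegrable (uu h α) volume x y := by
  apply (integrable_uu h0 h1 a0 a2 (le_trans hx hy)).mono_set
  rw [uIcc_of_le hy, uIcc_of_le (le_trans hx hy)]
  exact Icc_subset_Icc hx le_rfl

lemma integrable_uu2' {h : ℝ} (h0 : 0 < h) (h1 : h < 1/2)
    {x y : ℝ} (hx : 0 ≤ x) (hy : x ≤ y) :
    IntervalIntegrable (uu h (2*h)) volume x y := by
  apply (integrable_uu2 h0 h1 (le_trans hx hy)).mono_set
  rw [uIcc_of_le hy, uIcc_of_le (le_trans hx hy)]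
  exact Icc_subset_Icc hx le_rfl

lemma HH_sub {h α : ℝ} (h0 : 0 < h) (h1 : h < 1/2) (a0 : 0 < α) (a2 : α < 2*h)
    {x y : ℝ} (hx : rho h α ≤ x) (hy : x ≤ y) :
    HH h α y - HH h α x = ∫ w in x..y, uu h α w := by
  rw [HH, HH, ← intervalIntegral.integral_add_adjacent_intervals
    (integrable_uu h0 h1 a0 a2 hx) (integrable_uu' h0 h1 a0 a2 hx hy)]
  ring

lemma HH2_sub {h : ℝ} (h0 : 0 < h) (h1 : h < 1/2)
    {x y : ℝ} (hx : 0 ≤ x) (hy : x ≤ y) :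
    HH h (2*h) y - HH h (2*h) x = ∫ w in x..y, uu h (2*h) w := by
  rw [HH, HH, rho_two_h h0 h1, ← intervalIntegral.integral_add_adjacent_intervals
    (integrable_uu2 h0 h1 hx) (integrable_uu2' h0 h1 hx hy)]
  ring

lemma F_mono {h α : ℝ} (h0 : 0 < h) (h1 : h < 1/2) (a0 : 0 < α) (a2 : α < 2*h)
    {x y : ℝ} (hx : rho h α ≤ x) (hxy : x < y) :
    HH h α x - HH h (2*h) x < HH h α y - HH h (2*h) y := by
  have hR0 : (0:ℝ) < rho h α := rho_pos h0 h1 a0 a2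
  have hx0 : 0 ≤ x := by linarith
  have i1 := integrable_uu' h0 h1 a0 a2 hx hxy.le
  have i2 := integrable_uu2' h0 h1 hx0 hxy.le
  have hpos : 0 < ∫ w in x..y, (uu h α w - uu h (2*h) w) := by
    apply intervalIntegral.intervalIntegral_pos_of_pos_on (i1.sub i2) _ hxy
    intro w hw
    have : rho h α < w := lt_of_le_of_lt hx hw.1
    linarith [uu_lt h0 h1 a0 a2 this]
  rw [intervalIntegral.integral_sub i1 i2] at hpos
  have e1 := HH_sub h0 h1 a0 a2 hx hxy.le
  have e2 := HH2_sub h0 h1 hx0 hxy.le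
  linarith

lemma F_neg_at_R {h α : ℝ} (h0 : 0 < h) (h1 : h < 1/2) (a0 : 0 < α) (a2 : α < 2*h) :
    HH h α (rho h α) - HH h (2*h) (rho h α) < 0 := by
  have hR0 : (0:ℝ) < rho h α := rho_pos h0 h1 a0 a2
  have e1 : HH h α (rho h α) = 0 := by rw [HH, intervalIntegral.integral_same]
  have e2 : 0 < HH h (2*h) (rho h α) := by
    rw [HH, rho_two_h h0 h1]
    apply intervalIntegral.intervalIntegral_pos_of_pos_on (integrable_uu2 h0 h1 hR0.le) _ hR0
    intro w hw
    exact uu_pos (α := 2*h) h0 h1 (by linarith) le_rfl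
      (by rw [rho_two_h h0 h1]; exact hw.1)
  linarith

lemma HH_contOn {h α : ℝ} (h0 : 0 < h) (h1 : h < 1/2) (a0 : 0 < α) (a2 : α < 2*h)
    {X : ℝ} (hX : rho h α ≤ X) :
    ContinuousOn (fun ρ => HH h α ρ - HH h (2*h) ρ) (Icc (rho h α) X) := by
  have hR0 : (0:ℝ) < rho h α := rho_pos h0 h1 a0 a2
  apply ContinuousOn.sub
  · have := intervalIntegral.continuousOn_primitive_interval
      (a := rho h α) (b := X) (μ := volume) (f := uu h α)
      (by rw [uIcc_of_le hX]
          exact (integrableOn_Icc_iff_integrableOn_Ioc).2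
            ((intervalIntegrable_iff_integrableOn_Ioc_of_le hX).1
              (integrable_uu h0 h1 a0 a2 hX)))
    rw [uIcc_of_le hX] at this
    exact this.congr (fun ρ _ => by rw [HH])
  · have hX0 : (0:ℝ) ≤ X := by linarith
    have := intervalIntegral.continuousOn_primitive_interval
      (a := 0) (b := X) (μ := volume) (f := uu h (2*h))
      (by rw [uIcc_of_le hX0]
          exact (integrableOn_Icc_iff_integrableOn_Ioc).2
            ((intervalIntegrable_iff_integrableOn_Ioc_of_le hX0).1
              (integrable_uu2 h0 h1 hX0)))
    rw [uIcc_of_le hX0] at this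
    apply (this.mono (Icc_subset_Icc hR0.le le_rfl)).congr
    intro ρ _
    rw [HH, rho_two_h h0 h1]

noncomputable def ff (h α t : ℝ) : ℝ :=
  (2*h*t - α) / (Real.sqrt (t^2-1) * Real.sqrt (t^2 - 1 - (2*h*t - α)^2))

lemma image_mono_Ioo {g : ℝ → ℝ} (hc : Continuous g) {a b : ℝ}
    (hm : StrictMonoOn g (Icc a b)) (hab : a ≤ b) :
    g '' Ioo a b = Ioo (g a) (g b) := by
  apply Subset.antisymm
  · rintro _ ⟨w, hw, rfl⟩
    exact ⟨hm (left_mem_Icc.2 hab) (Ioo_subset_Icc_self hw) hw.1,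
      hm (Ioo_subset_Icc_self hw) (right_mem_Icc.2 hab) hw.2⟩
  · exact intermediate_value_Ioo hab hc.continuousOn

lemma my_cosh_sm {a b : ℝ} (ha : 0 ≤ a) :
    StrictMonoOn Real.cosh (Icc a b) := by
  intro x hx y hy hxy
  rw [Real.cosh_lt_cosh, abs_of_nonneg (le_trans ha hx.1), abs_of_nonneg (le_trans ha hy.1)]
  exact hxy

lemma cv_cosh {h α : ℝ} (h0 : 0 < h) (h1 : h < 1/2) (a0 : 0 < α) (a2 : α ≤ 2*h)
    {ρ : ℝ} (hρ : rho h α ≤ ρ) :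
    ∫ t in Ioo (phi h α) (Real.cosh ρ), ff h α t = ∫ w in Ioo (rho h α) ρ, uu h α w := by
  have hR0 : 0 ≤ rho h α := rho_nonneg h0 h1 a0 a2
  have him : Real.cosh '' Ioo (rho h α) ρ = Ioo (phi h α) (Real.cosh ρ) := by
    rw [image_mono_Ioo Real.continuous_cosh (my_cosh_sm hR0) hρ, cosh_rho h0 h1 a0 a2]
  rw [← him, MeasureTheory.integral_image_eq_integral_abs_deriv_smul measurableSet_Ioo
    (fun x _ => (Real.hasDerivAt_cosh x).hasDerivWithinAt)
    ((my_cosh_sm hR0).injOn.mono Ioo_subset_Icc_self)]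
  apply setIntegral_congr_fun measurableSet_Ioo
  intro w hw
  have hw0 : 0 < w := lt_of_le_of_lt hR0 hw.1
  have hs : 0 < Real.sinh w := Real.sinh_pos_iff.2 hw0
  have hD := D_pos h0 h1 a0 a2 hw.1
  have hsq : Real.cosh w ^ 2 - 1 = Real.sinh w ^ 2 := by
    have := Real.cosh_sq w; linarith
  simp only [smul_eq_mul, abs_of_pos hs]
  rw [ff, hsq, show Real.sinh w^2 - (2*h*Real.cosh w - α)^2
      = Real.sinh w ^ 2 - (-α + 2*h*Real.cosh w)^2 from by ring, Real.sqrt_sq hs.le, uu]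
  have hsD : Real.sqrt (Real.sinh w ^ 2 - (-α + 2*h*Real.cosh w)^2) ≠ 0 :=
    (Real.sqrt_pos.2 hD).ne'
  field_simp
  ring

lemma cv_affine {h α : ℝ} (h0 : 0 < h) (h1 : h < 1/2) {T : ℝ} (hT : 1 ≤ T) :
    ∫ t in Ioo (phi h α) (lam h α * T + (phi h α - lam h α)), ff h α t
      = ∫ τ in Ioo 1 T, lam h α * ff h α (lam h α * τ + (phi h α - lam h α)) := by
  have hL : 0 < lam h α := lam_pos h0 h1
  have hmono : StrictMonoOn (fun τ => lam h α * τ + (phi h α - lam h α)) (Icc 1 T) := by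
    intro x _ y _ hxy
    simp only
    nlinarith
  have him : (fun τ => lam h α * τ + (phi h α - lam h α)) '' Ioo 1 T
      = Ioo (phi h α) (lam h α * T + (phi h α - lam h α)) := by
    rw [image_mono_Ioo (by fun_prop) hmono hT]
    norm_num
  rw [← him, MeasureTheory.integral_image_eq_integral_abs_deriv_smul measurableSet_Ioo
    (fun x _ => (((hasDerivAt_id' (x := x)).const_mul (lam h α)).add_const
      (phi h α - lam h α)).hasDerivWithinAt)
    (hmono.injOn.mono Ioo_subset_Icc_self)]
  apply setIntegral_congr_fun measurableSet_Ioo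
  intro τ _
  simp [abs_of_pos hL, mul_one]

lemma uu_eq_pull {h α : ℝ} (h0 : 0 < h) (h1 : h < 1/2) (a0 : 0 < α) (a2 : α ≤ 2*h)
    {w : ℝ} (hw : rho h α < w) :
    |Real.sinh w| • ff h α (Real.cosh w) = uu h α w := by
  have hR0 : 0 ≤ rho h α := rho_nonneg h0 h1 a0 a2
  have hw0 : 0 < w := lt_of_le_of_lt hR0 hw
  have hs : 0 < Real.sinh w := Real.sinh_pos_iff.2 hw0
  have hD := D_pos h0 h1 a0 a2 hw
  have hsq : Real.cosh w ^ 2 - 1 = Real.sinh w ^ 2 := by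
    have := Real.cosh_sq w; linarith
  simp only [smul_eq_mul, abs_of_pos hs]
  rw [ff, hsq, show Real.sinh w^2 - (2*h*Real.cosh w - α)^2
      = Real.sinh w ^ 2 - (-α + 2*h*Real.cosh w)^2 from by ring, Real.sqrt_sq hs.le, uu]
  have hsD : Real.sqrt (Real.sinh w ^ 2 - (-α + 2*h*Real.cosh w)^2) ≠ 0 :=
    (Real.sqrt_pos.2 hD).ne'
  field_simp
  ring

set_option maxHeartbeats 1000000 in
lemma ff_le_A {h α : ℝ} (h0 : 0 < h) (h1 : h < 1/2) (a0 : 0 < α) (a2 : α < 2*h)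
    {τ : ℝ} (hτ : 1 < τ) :
    ff h (2*h) τ ≤ lam h α * ff h α (lam h α * τ + (phi h α - lam h α)) := by
  have d := d_pos h0 h1
  have hL := lam_pos (α := α) h0 h1
  have hf1 := phi_gt_one h0 h1 a0 a2
  have htf : phi h α < lam h α * τ + (phi h α - lam h α) := by nlinarith
  have ht1 : 1 < lam h α * τ + (phi h α - lam h α) := lt_trans hf1 htf
  have hQ2 : 0 < τ^2 - 1 - (2*h*τ - 2*h)^2 :=
    Q_pos (α := 2*h) h0 h1 (by linarith) le_rfl (by rw [phi_two_h h0 h1]; exact hτ)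
  have hQα : 0 < (lam h α * τ + (phi h α - lam h α))^2 - 1
      - (2*h*(lam h α * τ + (phi h α - lam h α)) - α)^2 := Q_pos h0 h1 a0 a2.le htf
  have hrel := quad_rel (α := α) h0 h1 τ
  have hnum : 0 < 2*h*(lam h α * τ + (phi h α - lam h α)) - α := by
    nlinarith [two_h_phi h0 h1 a0 a2.le]
  have hnum2 : 0 ≤ 2*h*τ - 2*h := by nlinarith
  have hx1 : 0 < (lam h α * τ + (phi h α - lam h α))^2 - 1 := by nlinarith
  have hy1 : 0 < τ^2 - 1 := by nlinarith
  rw [ff, ff, hrel, Real.sqrt_mul (sq_nonneg (lam h α)), Real.sqrt_sq hL.le]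
  have e : lam h α * ((2*h*(lam h α * τ + (phi h α - lam h α)) - α) /
        (Real.sqrt ((lam h α * τ + (phi h α - lam h α))^2 - 1) *
          (lam h α * Real.sqrt (τ^2 - 1 - (2*h*τ - 2*h)^2))))
      = (2*h*(lam h α * τ + (phi h α - lam h α)) - α) /
        (Real.sqrt ((lam h α * τ + (phi h α - lam h α))^2 - 1) *
          Real.sqrt (τ^2 - 1 - (2*h*τ - 2*h)^2)) := by
    have hX : Real.sqrt ((lam h α * τ + (phi h α - lam h α))^2 - 1) ≠ 0 :=
      (Real.sqrt_pos.2 hx1).ne'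
    have hY : Real.sqrt (τ^2 - 1 - (2*h*τ - 2*h)^2) ≠ 0 := (Real.sqrt_pos.2 hQ2).ne'
    field_simp
  rw [e, div_le_div_iff₀ (by positivity) (by positivity)]
  have ea : (2*h*τ-2*h) * Real.sqrt ((lam h α * τ + (phi h α - lam h α))^2 - 1)
      = Real.sqrt ((2*h*τ-2*h)^2 * ((lam h α * τ + (phi h α - lam h α))^2 - 1)) := by
    rw [Real.sqrt_mul (sq_nonneg _), Real.sqrt_sq hnum2]
  have eb : (2*h*(lam h α * τ + (phi h α - lam h α)) - α) * Real.sqrt (τ^2-1)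
      = Real.sqrt ((2*h*(lam h α * τ + (phi h α - lam h α)) - α)^2 * (τ^2-1)) := by
    rw [Real.sqrt_mul (sq_nonneg _), Real.sqrt_sq hnum.le]
  have key : (2*h*τ-2*h) * Real.sqrt ((lam h α * τ + (phi h α - lam h α))^2 - 1)
      ≤ (2*h*(lam h α * τ + (phi h α - lam h α)) - α) * Real.sqrt (τ^2-1) := by
    rw [ea, eb]
    apply Real.sqrt_le_sqrt
    nlinarith [core_poly h0 h1 a0 a2 hτ.le]
  have hYnn : 0 ≤ Real.sqrt (τ^2 - 1 - (2*h*τ - 2*h)^2) := Real.sqrt_nonneg _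
  rw [← mul_assoc, ← mul_assoc]
  exact mul_le_mul_of_nonneg_right key hYnn

lemma A_nonneg {h α : ℝ} (h0 : 0 < h) (h1 : h < 1/2) (a0 : 0 < α) (a2 : α < 2*h)
    {τ : ℝ} (hτ : 1 < τ) :
    0 ≤ lam h α * ff h α (lam h α * τ + (phi h α - lam h α)) := by
  have hL := lam_pos (α := α) h0 h1
  have hf1 := phi_gt_one h0 h1 a0 a2
  have htf : phi h α < lam h α * τ + (phi h α - lam h α) := by nlinarith
  have hnum : 0 < 2*h*(lam h α * τ + (phi h α - lam h α)) - α := by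
    nlinarith [two_h_phi h0 h1 a0 a2.le]
  apply mul_nonneg hL.le
  rw [ff]
  positivity

set_option maxHeartbeats 1000000 in
lemma F_nonneg_exists {h α : ℝ} (h0 : 0 < h) (h1 : h < 1/2) (a0 : 0 < α) (a2 : α < 2*h) :
    ∃ X, rho h α < X ∧ 0 ≤ HH h α X - HH h (2*h) X := by
  have d := d_pos h0 h1
  have hL : 0 < lam h α := lam_pos h0 h1
  have hL1 : lam h α < 1 := lam_lt_one h0 h1 a0 a2
  have hf1 : 1 < phi h α := phi_gt_one h0 h1 a0 a2
  have hμ : 0 < phi h α - lam h α := by linarith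
  set C0 : ℝ := max (phi h α) ((phi h α - lam h α)/(1 - lam h α)) + 1 with hC0def
  have hC0f : phi h α < C0 := lt_of_le_of_lt (le_max_left _ _) (lt_add_one _)
  have hC01 : 1 < C0 := lt_trans hf1 hC0f
  have hC0μ : (phi h α - lam h α)/(1 - lam h α) < C0 :=
    lt_of_le_of_lt (le_max_right _ _) (lt_add_one _)
  have hcoshX : Real.cosh (_root_.arcosh C0) = C0 := _root_.cosh_arcosh hC01.le
  have hX0 : 0 ≤ _root_.arcosh C0 := _root_.arcosh_nonneg hC01.le
  have hRX : rho h α < _root_.arcosh C0 := by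
    by_contra hcon
    push_neg at hcon
    have h5 : Real.cosh (_root_.arcosh C0) ≤ Real.cosh (rho h α) := by
      rw [Real.cosh_le_cosh, abs_of_nonneg hX0,
        abs_of_nonneg (rho_nonneg h0 h1 a0 a2.le)]
      exact hcon
    rw [hcoshX, cosh_rho h0 h1 a0 a2.le] at h5
    linarith
  have hTC : C0 ≤ (C0 - (phi h α - lam h α))/lam h α := by
    rw [le_div_iff₀ hL]
    have : (phi h α - lam h α) < C0 * (1 - lam h α) := by
      rw [div_lt_iff₀ (by linarith)] at hC0μ
      linarith
    nlinarith
  have hT1 : (1:ℝ) ≤ (C0 - (phi h α - lam h α))/lam h α := le_trans hC01.le hTC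
  have hLT : lam h α * ((C0 - (phi h α - lam h α))/lam h α) + (phi h α - lam h α) = C0 := by
    field_simp
    ring
  -- HH h α (_root_.arcosh C0) as an integral over Ioo 1 T
  have hHHα : HH h α (_root_.arcosh C0)
      = ∫ τ in Ioo 1 ((C0 - (phi h α - lam h α))/lam h α),
          lam h α * ff h α (lam h α * τ + (phi h α - lam h α)) := by
    have hcv2 := cv_affine (α := α) h0 h1 hT1
    rw [hLT] at hcv2
    rw [HH, intervalIntegral.integral_of_le hRX.le, integral_Ioc_eq_integral_Ioo,
      ← cv_cosh h0 h1 a0 a2.le hRX.le, hcoshX, hcv2]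
  have hHH2 : HH h (2*h) (_root_.arcosh C0) = ∫ τ in Ioo 1 C0, ff h (2*h) τ := by
    rw [HH, rho_two_h h0 h1, intervalIntegral.integral_of_le hX0,
      integral_Ioc_eq_integral_Ioo]
    have hcv := cv_cosh (α := 2*h) h0 h1 (by linarith) le_rfl (ρ := _root_.arcosh C0)
      (by rw [rho_two_h h0 h1]; exact hX0)
    rw [rho_two_h h0 h1, phi_two_h h0 h1, hcoshX] at hcv
    rw [← hcv]
  -- integrability of the transformed integrands
  have intuuα : IntegrableOn (uu h α) (Ioo (rho h α) (_root_.arcosh C0)) :=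
    ((intervalIntegrable_iff_integrableOn_Ioc_of_le hRX.le).1
      (integrable_uu h0 h1 a0 a2 hRX.le)).mono_set Ioo_subset_Ioc_self
  have intuu2 : IntegrableOn (uu h (2*h)) (Ioo 0 (_root_.arcosh C0)) :=
    ((intervalIntegrable_iff_integrableOn_Ioc_of_le hX0).1
      (integrable_uu2 h0 h1 hX0)).mono_set Ioo_subset_Ioc_self
  have himα : Real.cosh '' Ioo (rho h α) (_root_.arcosh C0) = Ioo (phi h α) C0 := by
    rw [image_mono_Ioo Real.continuous_cosh (my_cosh_sm (rho_nonneg h0 h1 a0 a2.le)) hRX.le,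
      cosh_rho h0 h1 a0 a2.le, hcoshX]
  have him2 : Real.cosh '' Ioo 0 (_root_.arcosh C0) = Ioo 1 C0 := by
    rw [image_mono_Ioo Real.continuous_cosh (my_cosh_sm le_rfl) hX0, Real.cosh_zero, hcoshX]
  have intffα : IntegrableOn (ff h α) (Ioo (phi h α) C0) := by
    rw [← himα]
    rw [MeasureTheory.integrableOn_image_iff_integrableOn_abs_deriv_smul measurableSet_Ioo
      (fun x _ => (Real.hasDerivAt_cosh x).hasDerivWithinAt)
      ((my_cosh_sm (rho_nonneg h0 h1 a0 a2.le)).injOn.mono Ioo_subset_Icc_self)]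
    exact intuuα.congr_fun (fun w hw => (uu_eq_pull h0 h1 a0 a2.le hw.1).symm)
      measurableSet_Ioo
  have intff2 : IntegrableOn (ff h (2*h)) (Ioo 1 C0) := by
    rw [← him2]
    rw [MeasureTheory.integrableOn_image_iff_integrableOn_abs_deriv_smul measurableSet_Ioo
      (fun x _ => (Real.hasDerivAt_cosh x).hasDerivWithinAt)
      ((my_cosh_sm le_rfl).injOn.mono Ioo_subset_Icc_self)]
    refine intuu2.congr_fun (fun w hw => ?_) measurableSet_Ioo
    exact (uu_eq_pull (α := 2*h) h0 h1 (by linarith) le_rfl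
      (by rw [rho_two_h h0 h1]; exact hw.1)).symm
  have himaff : (fun τ => lam h α * τ + (phi h α - lam h α)) ''
      Ioo 1 ((C0 - (phi h α - lam h α))/lam h α) = Ioo (phi h α) C0 := by
    have hmono : StrictMonoOn (fun τ => lam h α * τ + (phi h α - lam h α))
        (Icc 1 ((C0 - (phi h α - lam h α))/lam h α)) := by
      intro x _ y _ hxy
      simp only
      nlinarith
    rw [image_mono_Ioo (by fun_prop) hmono hT1, hLT]
    norm_num
  have intA : IntegrableOn (fun τ => lam h α * ff h α (lam h α * τ + (phi h α - lam h α)))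
      (Ioo 1 ((C0 - (phi h α - lam h α))/lam h α)) := by
    have hmono : StrictMonoOn (fun τ => lam h α * τ + (phi h α - lam h α))
        (Icc 1 ((C0 - (phi h α - lam h α))/lam h α)) := by
      intro x _ y _ hxy
      simp only
      nlinarith
    have := (MeasureTheory.integrableOn_image_iff_integrableOn_abs_deriv_smul
      measurableSet_Ioo
      (fun x _ => (((hasDerivAt_id' (x := x)).const_mul (lam h α)).add_const
        (phi h α - lam h α)).hasDerivWithinAt)
      (hmono.injOn.mono Ioo_subset_Icc_self) (ff h α)).1 (by rw [himaff]; exact intffα)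
    refine this.congr_fun (fun τ _ => ?_) measurableSet_Ioo
    simp [abs_of_pos hL]
  -- the comparison
  have step1 : ∫ τ in Ioo 1 C0, ff h (2*h) τ
      ≤ ∫ τ in Ioo 1 C0, lam h α * ff h α (lam h α * τ + (phi h α - lam h α)) := by
    apply setIntegral_mono_on intff2 (intA.mono_set (Ioo_subset_Ioo le_rfl hTC))
      measurableSet_Ioo
    intro τ hτ
    exact ff_le_A h0 h1 a0 a2 hτ.1
  have step2 : ∫ τ in Ioo 1 C0, lam h α * ff h α (lam h α * τ + (phi h α - lam h α))
      ≤ ∫ τ in Ioo 1 ((C0 - (phi h α - lam h α))/lam h α),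
          lam h α * ff h α (lam h α * τ + (phi h α - lam h α)) := by
    apply setIntegral_mono_set intA
    · filter_upwards [MeasureTheory.ae_restrict_mem measurableSet_Ioo] with τ hτ
      exact A_nonneg h0 h1 a0 a2 hτ.1
    · exact (Ioo_subset_Ioo le_rfl hTC).eventuallyLE
  exact ⟨_root_.arcosh C0, hRX, by rw [hHHα, hHH2]; linarith⟩


/-- for α ∈ (0, 2h), the graphs of H_α^h and of the entire graph
S^h = H_{2h}^h intersect in exactly one circle ρ = ρ*: H_α^h < S^h before ρ*,
they agree at ρ*, and H_α^h > S^h after ρ*. -/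
theorem stmt_16 (h α : ℝ) (hh : h ∈ Set.Ioo (0 : ℝ) (1 / 2))
    (hα : α ∈ Set.Ioo 0 (2 * h)) :
    ∃ ρstar : ℝ, rho h α < ρstar ∧
      (∀ ρ ∈ Set.Ico (rho h α) ρstar, HH h α ρ < HH h (2 * h) ρ) ∧
      HH h α ρstar = HH h (2 * h) ρstar ∧
      (∀ ρ : ℝ, ρstar < ρ → HH h (2 * h) ρ < HH h α ρ) := by
  obtain ⟨h0, h1⟩ := hh
  obtain ⟨a0, a2⟩ := hα
  obtain ⟨X, hRX, hFX⟩ := F_nonneg_exists h0 h1 a0 a2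
  have hFR : HH h α (rho h α) - HH h (2*h) (rho h α) < 0 := F_neg_at_R h0 h1 a0 a2
  have hX1 : 0 < HH h α (X+1) - HH h (2*h) (X+1) :=
    lt_of_le_of_lt hFX (F_mono h0 h1 a0 a2 hRX.le (by linarith))
  have hcont := HH_contOn h0 h1 a0 a2 (X := X+1) (by linarith)
  have hivt := intermediate_value_Icc (by linarith : rho h α ≤ X+1) hcont
  obtain ⟨ρstar, hρmem, hρeq0⟩ := hivt ⟨hFR.le, hX1.le⟩
  have hρeq : HH h α ρstar - HH h (2*h) ρstar = 0 := hρeq0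
  have hRρ : rho h α < ρstar := by
    rcases lt_or_eq_of_le hρmem.1 with hlt | heq
    · exact hlt
    · exfalso; rw [← heq] at hρeq; linarith
  refine ⟨ρstar, hRρ, ?_, ?_, ?_⟩
  · intro ρ hρ
    have := F_mono h0 h1 a0 a2 hρ.1 hρ.2
    linarith
  · linarith
  · intro ρ hρ
    have := F_mono h0 h1 a0 a2 hRρ.le hρ
    linarith
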